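/- Let n ≥ 1 and fix y ∈ ℝⁿ. The function h(x,t) = (4πt)^{−n/2} · exp(−‖x−y‖²/(4t)), defined for x ∈ ℝⁿ and t > 0, satisfies the heat equation ∂h/∂t = Σᵢ ∂²h/∂xᵢ² for all x ∈ ℝⁿ and t > 0. -/

import Mathlib

open Real

lemma spatial_hasDerivAt (c a K b : ℝ) (s : ℝ) :
    HasDerivAt (fun s => c * Real.exp (-((s - a) ^ 2 + K) / b))
      (c * Real.exp (-((s - a) ^ 2 + K) / b) * (-(2 * (s - a)) / b)) s := by
  have h1 : HasDerivAt (fun s : ℝ => (s - a) ^ 2 + K) (2 * (s - a)) s := by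
    have := (((hasDerivAt_id s).sub_const a).pow 2).add_const K
    simpa using this
  have h2 : HasDerivAt (fun s : ℝ => -((s - a) ^ 2 + K) / b) (-(2 * (s - a)) / b) s :=
    h1.neg.div_const b
  have h3 := (h2.exp).const_mul c
  refine h3.congr_deriv ?_
  ring

lemma spatial_deriv2 (c a K b : ℝ) (s0 : ℝ) :
    deriv (deriv (fun s => c * Real.exp (-((s - a) ^ 2 + K) / b))) s0
      = c * Real.exp (-((s0 - a) ^ 2 + K) / b) * ((2 * (s0 - a)) ^ 2 / b ^ 2 - 2 / b) := by
  have hd : deriv (fun s => c * Real.exp (-((s - a) ^ 2 + K) / b))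
      = fun s => c * Real.exp (-((s - a) ^ 2 + K) / b) * (-(2 * (s - a)) / b) := by
    funext s
    exact (spatial_hasDerivAt c a K b s).deriv
  rw [hd]
  have hlin : HasDerivAt (fun s : ℝ => -(2 * (s - a)) / b) (-2 / b) s0 := by
    have := (((hasDerivAt_id s0).sub_const a).const_mul 2).neg.div_const b
    simpa using this
  have := (spatial_hasDerivAt c a K b s0).mul hlin
  rw [HasDerivAt.deriv (f := fun s => c * Real.exp (-((s - a) ^ 2 + K) / b) * (-(2 * (s - a)) / b)) this]
  ring

lemma sum_update (n : ℕ) (x y : Fin n → ℝ) (i : Fin n) (s : ℝ) :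
    ∑ j, (Function.update x i s j - y j) ^ 2
      = (s - y i) ^ 2 + ∑ j ∈ Finset.univ.erase i, (x j - y j) ^ 2 := by
  have h : (fun j => (Function.update x i s j - y j) ^ 2)
      = Function.update (fun j => (x j - y j) ^ 2) i ((s - y i) ^ 2) := by
    funext j
    rcases eq_or_ne j i with rfl | hj
    · simp
    · simp [Function.update_apply, hj]
  rw [h, Finset.sum_update_of_mem (Finset.mem_univ i), Finset.erase_eq]

theorem heat_kernel_satisfies_heat_equation (n : ℕ) (hn : 1 ≤ n) (y : Fin n → ℝ) :
    let h : (Fin n → ℝ) → ℝ → ℝ := fun x t =>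
      (4 * Real.pi * t) ^ (-(n : ℝ) / 2) * Real.exp (-(∑ i, (x i - y i) ^ 2) / (4 * t))
    ∀ (x : Fin n → ℝ) (t : ℝ), 0 < t →
      deriv (fun t' => h x t') t
        = ∑ i, deriv (deriv (fun s => h (Function.update x i s) t)) (x i) := by
  intro h x t ht
  have hpi : (0:ℝ) < Real.pi := Real.pi_pos
  have h4t : (0:ℝ) < 4 * Real.pi * t := by positivity
  have h4tne : (4 * Real.pi * t) ≠ 0 := ne_of_gt h4t
  have htne : t ≠ 0 := ne_of_gt ht
  set p : ℝ := -(n : ℝ) / 2 with hp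
  set S : ℝ := ∑ i, (x i - y i) ^ 2 with hS
  set H : ℝ := (4 * Real.pi * t) ^ p * Real.exp (-S / (4 * t)) with hH
  -- time derivative
  have hlin : HasDerivAt (fun t' : ℝ => 4 * Real.pi * t') (4 * Real.pi) t := by
    simpa using (hasDerivAt_id t).const_mul (4 * Real.pi)
  have hrpow : HasDerivAt (fun u : ℝ => u ^ p) (p * (4 * Real.pi * t) ^ (p - 1))
      (4 * Real.pi * t) := Real.hasDerivAt_rpow_const (Or.inl h4tne)
  have h2 : HasDerivAt (fun t' : ℝ => (4 * Real.pi * t') ^ p)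
      (p * (4 * Real.pi * t) ^ (p - 1) * (4 * Real.pi)) t := hrpow.comp t hlin
  have h3 : HasDerivAt (fun t' : ℝ => -S / (4 * t')) (S / (4 * t ^ 2)) t := by
    have heq : (fun t' : ℝ => -S / (4 * t')) = fun t' : ℝ => (-S / 4) * t'⁻¹ := by
      funext u; ring
    rw [heq]
    have := (hasDerivAt_inv htne).const_mul (-S / 4)
    refine this.congr_deriv ?_
    field_simp
  have h4 : HasDerivAt (fun t' : ℝ => Real.exp (-S / (4 * t')))
      (Real.exp (-S / (4 * t)) * (S / (4 * t ^ 2))) t := h3.exp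
  have htime : HasDerivAt (fun t' => h x t') (H * (p / t + S / (4 * t ^ 2))) t := by
    have := h2.mul h4
    refine this.congr_deriv ?_
    rw [hH, Real.rpow_sub_one h4tne]
    field_simp
  rw [htime.deriv]
  -- spatial derivatives
  have hterm : ∀ i : Fin n,
      deriv (deriv (fun s => h (Function.update x i s) t)) (x i)
        = (H / (4 * t ^ 2)) * (x i - y i) ^ 2 - H / (2 * t) := by
    intro i
    set K : ℝ := ∑ j ∈ Finset.univ.erase i, (x j - y j) ^ 2 with hK
    have hfun : (fun s => h (Function.update x i s) t)
        = fun s => (4 * Real.pi * t) ^ p * Real.exp (-((s - y i) ^ 2 + K) / (4 * t)) := by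
      funext s
      simp only [h]
      rw [sum_update n x y i s]
    rw [hfun, spatial_deriv2]
    have hSi : S = (x i - y i) ^ 2 + K := by
      rw [hS, hK]
      have := sum_update n x y i (x i)
      rw [Function.update_eq_self] at this
      exact this
    rw [← hSi, ← hH]
    field_simp
    ring
  rw [Finset.sum_congr rfl fun i _ => hterm i]
  rw [Finset.sum_sub_distrib, ← Finset.mul_sum, ← hS, Finset.sum_const, Finset.card_univ,
    Fintype.card_fin, nsmul_eq_mul, hp]
  field_simp
  ring
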